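/- If (b_1,...,b_k) ∼ Dirichlet(a_1,...,a_k) and the partition is coarsened by merging the first two cells, then (b_1 + b_2, b_3, ..., b_k) ∼ Dirichlet(a_1 + a_2, a_3, ..., a_k). -/

import Mathlib

open MeasureTheory ProbabilityTheory

/-- A measure `ν` on `Fin k → ℝ` is Dirichlet with parameters `a` if it is the
law of the normalized vector of independent Gamma(a i, 1) random variables. -/
def IsDirichlet {k : ℕ} (a : Fin k → ℝ) (ν : Measure (Fin k → ℝ)) : Prop :=
  ∃ (Ω : Type) (_ : MeasureSpace Ω) (μ : Measure Ω) (_ : IsProbabilityMeasure μ)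
    (X : Fin k → Ω → ℝ), (∀ i, Measurable (X i)) ∧
    iIndepFun X μ ∧
    (∀ i, μ.map (X i) = gammaMeasure (a i) 1) ∧
    ν = μ.map (fun ω i => X i ω / ∑ j, X j ω)

section Aux
open Real Set

lemma cpow_eq_ofReal {x c : ℝ} (hx : 0 ≤ x) :
    (x : ℂ) ^ ((c : ℂ) - 1) = ((x ^ (c - 1) : ℝ) : ℂ) := by
  rw [show ((c : ℂ) - 1) = ((c - 1 : ℝ) : ℂ) by push_cast; ring,
    ← Complex.ofReal_cpow hx]

lemma beta_ae_eq {a b : ℝ} :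
    ∀ x ∈ Ioc (0:ℝ) 1, ((x:ℂ) ^ ((a:ℂ) - 1) * ((1:ℂ) - x) ^ ((b:ℂ) - 1))
      = ((x ^ (a - 1) * (1 - x) ^ (b - 1) : ℝ) : ℂ) := by
  intro x hx
  rw [cpow_eq_ofReal hx.1.le, show ((1:ℂ) - (x:ℂ)) = ((1 - x : ℝ) : ℂ) by push_cast; ring,
    cpow_eq_ofReal (by linarith [hx.2]), Complex.ofReal_mul]

lemma beta_intervalIntegrable {a b : ℝ} (ha : 0 < a) (hb : 0 < b) :
    IntervalIntegrable (fun x : ℝ => x ^ (a - 1) * (1 - x) ^ (b - 1)) volume 0 1 := by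
  have h := (Complex.betaIntegral_convergent (u := (a:ℂ)) (v := (b:ℂ))
    (by simpa using ha) (by simpa using hb))
  have h2 := (intervalIntegrable_iff_integrableOn_Ioc_of_le zero_le_one).mp h.norm
  rw [intervalIntegrable_iff_integrableOn_Ioc_of_le zero_le_one]
  refine h2.congr_fun ?_ measurableSet_Ioc
  intro x hx
  simp only
  rw [beta_ae_eq x hx, Complex.norm_real, Real.norm_eq_abs, abs_of_nonneg (mul_nonneg (Real.rpow_nonneg hx.1.le _) (Real.rpow_nonneg (by linarith [hx.2]) _))]

lemma beta_integral_eq {a b : ℝ} (ha : 0 < a) (hb : 0 < b) :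
    Real.Gamma a * Real.Gamma b
      = Real.Gamma (a + b) * ∫ x in (0:ℝ)..1, x ^ (a - 1) * (1 - x) ^ (b - 1) := by
  have h := Complex.Gamma_mul_Gamma_eq_betaIntegral (s := (a:ℂ)) (t := (b:ℂ))
    (by simpa using ha) (by simpa using hb)
  have hB : Complex.betaIntegral a b
      = ((∫ x in (0:ℝ)..1, x ^ (a - 1) * (1 - x) ^ (b - 1) : ℝ) : ℂ) := by
    rw [Complex.betaIntegral, ← intervalIntegral.integral_ofReal]
    rw [intervalIntegral.integral_of_le zero_le_one, intervalIntegral.integral_of_le zero_le_one]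
    exact setIntegral_congr_fun measurableSet_Ioc beta_ae_eq
  rw [Complex.Gamma_ofReal, Complex.Gamma_ofReal, ← Complex.ofReal_add, Complex.Gamma_ofReal,
    hB, ← Complex.ofReal_mul, ← Complex.ofReal_mul] at h
  exact_mod_cast h

lemma beta_lintegral {a b : ℝ} (ha : 0 < a) (hb : 0 < b) :
    ∫⁻ u in Ioo (0:ℝ) 1, ENNReal.ofReal (u ^ (a - 1) * (1 - u) ^ (b - 1))
      = ENNReal.ofReal (Real.Gamma a * Real.Gamma b / Real.Gamma (a + b)) := by
  have hre : (volume : Measure ℝ).restrict (Ioo (0:ℝ) 1)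
      = (volume : Measure ℝ).restrict (Ioc (0:ℝ) 1) :=
    Measure.restrict_congr_set Ioo_ae_eq_Ioc
  rw [hre]
  have hInt : IntegrableOn (fun x : ℝ => x ^ (a - 1) * (1 - x) ^ (b - 1)) (Ioc 0 1) volume :=
    (intervalIntegrable_iff_integrableOn_Ioc_of_le zero_le_one).mp (beta_intervalIntegrable ha hb)
  rw [← ofReal_integral_eq_lintegral_ofReal hInt ?_]
  · congr 1
    have h2 := beta_integral_eq ha hb
    rw [intervalIntegral.integral_of_le zero_le_one] at h2
    rw [eq_div_iff (Real.Gamma_pos_of_pos (by linarith)).ne', mul_comm _ (Real.Gamma (a+b)),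
      ← h2]
  · exact (ae_restrict_iff' measurableSet_Ioc).mpr (ae_of_all _ fun x hx =>
      mul_nonneg (Real.rpow_nonneg hx.1.le _) (Real.rpow_nonneg (by linarith [hx.2]) _))

lemma beta_lintegral_scaled {a b t : ℝ} (ht : 0 < t) :
    ∫⁻ x in Ioo (0:ℝ) t, ENNReal.ofReal (x ^ (a - 1) * (t - x) ^ (b - 1))
      = ENNReal.ofReal (t ^ (a + b - 1))
        * ∫⁻ u in Ioo (0:ℝ) 1, ENNReal.ofReal (u ^ (a - 1) * (1 - u) ^ (b - 1)) := by
  have hmap : ((volume : Measure ℝ).map (t * ·)) = ENNReal.ofReal |t⁻¹| • volume :=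
    Real.map_volume_mul_left ht.ne'
  have key : ∫⁻ x, (Ioo (0:ℝ) t).indicator
      (fun x => ENNReal.ofReal (x ^ (a - 1) * (t - x) ^ (b - 1))) x
      = ENNReal.ofReal t * ∫⁻ u, (Ioo (0:ℝ) t).indicator
        (fun x => ENNReal.ofReal (x ^ (a - 1) * (t - x) ^ (b - 1))) (t * u) := by
    have hmeas : Measurable ((Ioo (0:ℝ) t).indicator
        (fun x => ENNReal.ofReal (x ^ (a - 1) * (t - x) ^ (b - 1)))) := by
      apply Measurable.indicator _ measurableSet_Ioo
      exact (((measurable_id.pow_const _).mul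
        ((measurable_const.sub measurable_id).pow_const _)).ennreal_ofReal)
    rw [← lintegral_map hmeas (measurable_const_mul t), hmap, lintegral_smul_measure, smul_eq_mul,
      abs_of_pos (inv_pos.mpr ht), ← mul_assoc, ← ENNReal.ofReal_mul ht.le,
      mul_inv_cancel₀ ht.ne', ENNReal.ofReal_one, one_mul]
  rw [← lintegral_indicator measurableSet_Ioo, key, ← lintegral_indicator measurableSet_Ioo]
  have heq : ∀ u : ℝ, (Ioo (0:ℝ) t).indicator
      (fun x => ENNReal.ofReal (x ^ (a - 1) * (t - x) ^ (b - 1))) (t * u)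
      = ENNReal.ofReal (t ^ (a - 1) * t ^ (b - 1)) * (Ioo (0:ℝ) 1).indicator
        (fun u => ENNReal.ofReal (u ^ (a - 1) * (1 - u) ^ (b - 1))) u := by
    intro u
    by_cases hu : u ∈ Ioo (0:ℝ) 1
    · have htu : t * u ∈ Ioo (0:ℝ) t := by
        constructor
        · exact mul_pos ht hu.1
        · nlinarith [hu.2]
      rw [indicator_of_mem htu, indicator_of_mem hu, ← ENNReal.ofReal_mul (by positivity)]
      congr 1
      rw [Real.mul_rpow ht.le hu.1.le, show t - t * u = t * (1 - u) by ring,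
        Real.mul_rpow ht.le (by linarith [hu.2])]
      ring
    · have htu : t * u ∉ Ioo (0:ℝ) t := by
        simp only [mem_Ioo, not_and_or, not_lt] at hu ⊢
        rcases hu with h | h
        · left; nlinarith
        · right; nlinarith
      rw [indicator_of_notMem htu, indicator_of_notMem hu, mul_zero]
  simp_rw [heq]
  rw [lintegral_const_mul _ (by
    apply Measurable.indicator _ measurableSet_Ioo
    exact (((measurable_id.pow_const _).mul
      ((measurable_const.sub measurable_id).pow_const _)).ennreal_ofReal))]
  rw [← mul_assoc, ← ENNReal.ofReal_mul ht.le, lintegral_indicator measurableSet_Ioo]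
  congr 2
  rw [← Real.rpow_add ht,
    show t * t ^ (a - 1 + (b - 1)) = t ^ (1:ℝ) * t ^ (a - 1 + (b - 1)) by rw [Real.rpow_one],
    ← Real.rpow_add ht]
  ring_nf

lemma gammaPDF_mul_meas (a b t : ℝ) :
    Measurable (fun x => gammaPDF a 1 x * gammaPDF b 1 (t - x)) := by
  refine Measurable.mul (f := fun x => gammaPDF a 1 x) (g := fun x => gammaPDF b 1 (t - x)) ?_ ?_
  · exact (measurable_gammaPDFReal a 1).ennreal_ofReal
  · exact ((measurable_gammaPDFReal b 1).comp (measurable_const.sub measurable_id)).ennreal_ofReal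

lemma gammaPDF_conv {a b : ℝ} (ha : 0 < a) (hb : 0 < b) {t : ℝ} (ht : t ≠ 0) :
    ∫⁻ x, gammaPDF a 1 x * gammaPDF b 1 (t - x) = gammaPDF (a + b) 1 t := by
  rcases lt_or_gt_of_ne ht with htneg | htpos
  · have : ∀ x : ℝ, gammaPDF a 1 x * gammaPDF b 1 (t - x) = 0 := by
      intro x
      rcases lt_or_ge x 0 with hx | hx
      · rw [gammaPDF_of_neg hx, zero_mul]
      · rw [gammaPDF_of_neg (by linarith : t - x < 0), mul_zero]
    simp only [this, lintegral_zero, gammaPDF_of_neg htneg]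
  · -- t > 0
    have hae : (fun x => gammaPDF a 1 x * gammaPDF b 1 (t - x))
        =ᵐ[volume] (Ioo (0:ℝ) t).indicator (fun x =>
          ENNReal.ofReal (Real.exp (-t) / (Real.Gamma a * Real.Gamma b))
            * ENNReal.ofReal (x ^ (a - 1) * (t - x) ^ (b - 1))) := by
      have hz : volume ({0, t} : Set ℝ) = 0 :=
        (Set.toFinite ({0, t} : Set ℝ)).measure_zero _
      refine measure_mono_null ?_ hz
      intro x hx
      simp only [mem_setOf_eq] at hx
      by_contra hmem
      simp only [mem_insert_iff, mem_singleton_iff, not_or] at hmem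
      obtain ⟨hx0, hxt⟩ := hmem
      apply hx
      simp only [mem_setOf_eq]
      by_cases hio : x ∈ Ioo (0:ℝ) t
      · have hxpos := hio.1
        have htx : (0:ℝ) < t - x := by linarith [hio.2]
        rw [indicator_of_mem hio, gammaPDF_of_nonneg hxpos.le,
          gammaPDF_of_nonneg htx.le,
          ← ENNReal.ofReal_mul (by positivity), ← ENNReal.ofReal_mul (by positivity)]
        congr 1
        rw [Real.one_rpow, Real.one_rpow]
        have hexp : Real.exp (-(1 * x)) * Real.exp (-(1 * (t - x))) = Real.exp (-t) := by
          rw [← Real.exp_add]; congr 1; ring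
        have hGa := Real.Gamma_pos_of_pos ha
        have hGb := Real.Gamma_pos_of_pos hb
        rw [← hexp]
        ring
      · rw [indicator_of_notMem hio]
        simp only [mem_Ioo, not_and_or, not_lt] at hio
        rcases hio with h | h
        · rw [gammaPDF_of_neg (lt_of_le_of_ne h hx0), zero_mul]
        · rw [show gammaPDF b 1 (t - x) = 0 from gammaPDF_of_neg (by
            refine sub_neg.mpr (lt_of_le_of_ne h ?_)
            exact fun hc => hxt hc.symm), mul_zero]
    rw [lintegral_congr_ae hae, lintegral_indicator measurableSet_Ioo,
      lintegral_const_mul' _ _ ENNReal.ofReal_ne_top,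
      beta_lintegral_scaled htpos, beta_lintegral ha hb,
      gammaPDF_of_nonneg htpos.le]
    rw [← ENNReal.ofReal_mul (by positivity), ← ENNReal.ofReal_mul (by positivity)]
    congr 1
    rw [Real.one_rpow]
    have hGa := Real.Gamma_pos_of_pos ha
    have hGb := Real.Gamma_pos_of_pos hb
    have hGab := Real.Gamma_pos_of_pos (by linarith : 0 < a + b)
    field_simp

lemma gammaMeasure_conv {a b : ℝ} (ha : 0 < a) (hb : 0 < b) :
    ((gammaMeasure a 1).prod (gammaMeasure b 1)).map (fun p : ℝ × ℝ => p.1 + p.2)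
      = gammaMeasure (a + b) 1 := by
  have hpdfa : Measurable (gammaPDF a 1) := (measurable_gammaPDFReal a 1).ennreal_ofReal
  have hpdfb : Measurable (gammaPDF b 1) := (measurable_gammaPDFReal b 1).ennreal_ofReal
  ext s hs
  rw [Measure.map_apply measurable_add hs, gammaMeasure, gammaMeasure,
    Measure.prod_apply (measurable_add hs)]
  have hadds : MeasurableSet ((fun p : ℝ × ℝ => p.1 + p.2) ⁻¹' s) := measurable_add hs
  rw [MeasureTheory.lintegral_withDensity_eq_lintegral_mul _ hpdfa
    (measurable_measure_prodMk_left hadds)]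
  have step1 : ∀ x : ℝ, (volume.withDensity (gammaPDF b 1))
      (Prod.mk x ⁻¹' ((fun p : ℝ × ℝ => p.1 + p.2) ⁻¹' s))
      = ∫⁻ z, s.indicator (fun z => gammaPDF b 1 (z - x)) z := by
    intro x
    rw [withDensity_apply _ (measurable_prodMk_left hadds), ← lintegral_indicator
      (measurable_prodMk_left hadds)]
    have : ∀ y : ℝ, (Prod.mk x ⁻¹' ((fun p : ℝ × ℝ => p.1 + p.2) ⁻¹' s)).indicator
        (gammaPDF b 1) y = (fun z => s.indicator (fun z => gammaPDF b 1 (z - x)) z) (y + x) := by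
      intro y
      simp only [Set.indicator_apply, mem_preimage, mem_setOf_eq]
      by_cases hy : x + y ∈ s
      · simp [hy, show y + x ∈ s from by rwa [add_comm], show y + x - x = y by ring]
      · simp [hy, show y + x ∉ s from by rwa [add_comm]]
    simp_rw [this]
    exact lintegral_add_right_eq_self _ x
  simp_rw [step1]
  have hker : Measurable (fun p : ℝ × ℝ => gammaPDF a 1 p.1
      * s.indicator (fun z => gammaPDF b 1 (z - p.1)) p.2) := by
    apply Measurable.mul (hpdfa.comp measurable_fst)
    have : (fun p : ℝ × ℝ => s.indicator (fun z => gammaPDF b 1 (z - p.1)) p.2)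
        = fun p : ℝ × ℝ => ({q : ℝ × ℝ | q.2 ∈ s}.indicator
          (fun q : ℝ × ℝ => gammaPDF b 1 (q.2 - q.1)) p) := by
      funext p
      by_cases hp : p.2 ∈ s <;> simp [Set.indicator_apply, hp]
    rw [this]
    exact Measurable.indicator (hpdfb.comp (measurable_snd.sub measurable_fst))
      (measurable_snd hs)
  calc ∫⁻ x, gammaPDF a 1 x * ∫⁻ z, s.indicator (fun z => gammaPDF b 1 (z - x)) z
      = ∫⁻ x, ∫⁻ z, gammaPDF a 1 x * s.indicator (fun z => gammaPDF b 1 (z - x)) z := by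
        congr 1; funext x
        exact (lintegral_const_mul' _ _ ENNReal.ofReal_ne_top).symm
    _ = ∫⁻ z, ∫⁻ x, gammaPDF a 1 x * s.indicator (fun z => gammaPDF b 1 (z - x)) z := by
        rw [lintegral_lintegral_swap hker.aemeasurable]
    _ = ∫⁻ z, s.indicator (fun z => ∫⁻ x, gammaPDF a 1 x * gammaPDF b 1 (z - x)) z := by
        congr 1; funext z
        by_cases hz : z ∈ s
        · simp only [indicator_of_mem hz]
        · simp only [indicator_of_notMem hz, mul_zero, lintegral_zero]
    _ = ∫⁻ z, s.indicator (gammaPDF (a + b) 1) z := by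
        apply lintegral_congr_ae
        have hz : volume ({0} : Set ℝ) = 0 := Real.volume_singleton
        refine measure_mono_null ?_ hz
        intro z hzz
        simp only [mem_setOf_eq] at hzz
        by_contra hmem
        simp only [mem_singleton_iff] at hmem
        apply hzz
        simp only [mem_setOf_eq]
        by_cases hz2 : z ∈ s
        · simp only [indicator_of_mem hz2]
          exact gammaPDF_conv ha hb hmem
        · simp only [indicator_of_notMem hz2]
    _ = (volume.withDensity (gammaPDF (a + b) 1)) s := by
        rw [withDensity_apply _ hs, lintegral_indicator hs]

lemma pi_eval_apply {n : ℕ} (m : Fin n → Measure ℝ) [∀ i, IsProbabilityMeasure (m i)]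
    (i : Fin n) {t : Set ℝ} (ht : MeasurableSet t) :
    Measure.pi m ((fun x : Fin n → ℝ => x i) ⁻¹' t) = m i t := by
  have : (fun x : Fin n → ℝ => x i) ⁻¹' t = univ.pi (Function.update (fun _ => univ) i t) := by
    rw [← Set.eval_preimage]
  rw [this, Measure.pi_pi]
  rw [Finset.prod_eq_single i (fun j _ hj => by
    rw [Function.update_of_ne hj]; exact measure_univ) (by simp)]
  rw [Function.update_self]

lemma pi_map_eval {n : ℕ} (m : Fin n → Measure ℝ) [∀ i, IsProbabilityMeasure (m i)]
    (i : Fin n) : (Measure.pi m).map (fun x => x i) = m i := by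
  ext t ht
  rw [Measure.map_apply (measurable_pi_apply i) ht, pi_eval_apply m i ht]

lemma map_pi_of_iIndep {Ω : Type} [MeasurableSpace Ω] {μ : Measure Ω} [IsProbabilityMeasure μ]
    {n : ℕ} {X : Fin n → Ω → ℝ} (hX : ∀ i, Measurable (X i))
    (h : iIndepFun X μ) :
    μ.map (fun ω i => X i ω) = Measure.pi (fun i => μ.map (X i)) := by
  haveI : ∀ i, IsProbabilityMeasure (μ.map (X i)) :=
    fun i => Measure.isProbabilityMeasure_map (hX i).aemeasurable
  refine (Measure.pi_eq (μ := fun i => μ.map (X i)) fun s hs => ?_).symm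
  rw [Measure.map_apply (measurable_pi_lambda _ fun i => hX i) (MeasurableSet.univ_pi hs)]
  have hpre : (fun ω i => X i ω) ⁻¹' (univ.pi s) = ⋂ i, X i ⁻¹' s i := by
    ext ω; simp [Set.mem_univ_pi]
  rw [hpre, h.meas_iInter (fun i => ⟨s i, hs i, rfl⟩)]
  exact Finset.prod_congr rfl fun i _ => (Measure.map_apply (hX i) (hs i)).symm

lemma iIndep_of_map_pi {Ω : Type} [MeasurableSpace Ω] {μ : Measure Ω} [IsProbabilityMeasure μ]
    {n : ℕ} {X : Fin n → Ω → ℝ} (hX : ∀ i, Measurable (X i))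
    (m : Fin n → Measure ℝ) [∀ i, IsProbabilityMeasure (m i)]
    (h : μ.map (fun ω i => X i ω) = Measure.pi m) :
    iIndepFun X μ := by
  have hXv : Measurable (fun ω i => X i ω) := measurable_pi_lambda _ fun i => hX i
  have hmarg : ∀ i (t : Set ℝ), MeasurableSet t → μ (X i ⁻¹' t) = m i t := by
    intro i t ht
    have he : X i ⁻¹' t = (fun ω j => X j ω) ⁻¹' ((fun x : Fin n → ℝ => x i) ⁻¹' t) := rfl
    rw [he, ← Measure.map_apply hXv ((measurable_pi_apply i) ht), h, pi_eval_apply m i ht]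
  refine iIndepFun_iff_measure_inter_preimage_eq_mul.mpr fun S sets H => ?_
  classical
  have hpre : (⋂ i ∈ S, X i ⁻¹' sets i)
      = (fun ω j => X j ω) ⁻¹' (univ.pi fun j => if j ∈ S then sets j else univ) := by
    ext ω
    simp only [mem_iInter, mem_preimage, Set.mem_univ_pi]
    constructor
    · intro hh j
      by_cases hj : j ∈ S
      · simpa [hj] using hh j hj
      · simp [hj]
    · intro hh j hj
      have := hh j
      simpa [hj] using this
  have hmeas : ∀ j, MeasurableSet (if j ∈ S then sets j else univ) := by
    intro j
    by_cases hj : j ∈ S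
    · simpa [hj] using H j hj
    · simp [hj]
  rw [hpre, ← Measure.map_apply hXv (MeasurableSet.univ_pi hmeas), h, Measure.pi_pi]
  have : ∀ j : Fin n, m j (if j ∈ S then sets j else univ)
      = if j ∈ S then m j (sets j) else 1 := by
    intro j; split_ifs <;> simp
  simp_rw [this]
  rw [Finset.prod_ite_mem Finset.univ S, Finset.univ_inter]
  exact Finset.prod_congr rfl fun i hi => (hmarg i (sets i) (H i hi)).symm

lemma pi_map_merge {k : ℕ} (γ : Fin (k + 2) → Measure ℝ) [∀ i, IsProbabilityMeasure (γ i)]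
    (ρ : Measure ℝ) [IsProbabilityMeasure ρ]
    (hρ : ((γ 0).prod (γ 1)).map (fun p : ℝ × ℝ => p.1 + p.2) = ρ) :
    (Measure.pi γ).map (fun x => (Fin.cons (x 0 + x 1) (fun j : Fin k => x j.succ.succ)
        : Fin (k + 1) → ℝ))
      = Measure.pi ((Fin.cons ρ (fun j : Fin k => γ j.succ.succ)) : Fin (k + 1) → Measure ℝ) := by
  set rest : Fin k → Measure ℝ := fun j => γ j.succ.succ with hrest
  let e₁ : (Fin (k + 2) → ℝ) ≃ᵐ ℝ × (Fin (k + 1) → ℝ) :=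
    MeasurableEquiv.piFinSuccAbove (fun _ => ℝ) 0
  let e₂ : (Fin (k + 1) → ℝ) ≃ᵐ ℝ × (Fin k → ℝ) :=
    MeasurableEquiv.piFinSuccAbove (fun _ => ℝ) 0
  have hT : (fun x : Fin (k + 2) → ℝ => (Fin.cons (x 0 + x 1)
        (fun j : Fin k => x j.succ.succ) : Fin (k + 1) → ℝ))
      = e₂.symm ∘ (Prod.map (fun p : ℝ × ℝ => p.1 + p.2) id)
        ∘ (MeasurableEquiv.prodAssoc (α := ℝ) (β := ℝ) (γ := Fin k → ℝ)).symm
        ∘ (Prod.map id e₂) ∘ e₁ := by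
    funext x
    simp only [Function.comp_apply, MeasurableEquiv.piFinSuccAbove, MeasurableEquiv.prodAssoc,
      MeasurableEquiv.symm, MeasurableEquiv.coe_mk, Equiv.prodAssoc, Equiv.coe_fn_mk,
      Equiv.coe_fn_symm_mk, Prod.map, e₁, e₂]
    simp only [Equiv.symm_symm, Fin.insertNthEquiv, Equiv.coe_fn_mk, Equiv.coe_fn_symm_mk,
      Fin.insertNth_zero, Fin.removeNth_zero, id_eq]
    ext j
    refine Fin.cases ?_ (fun j => ?_) j <;> simp [Fin.tail]
  rw [hT]
  have hadd : Measurable fun p : ℝ × ℝ => p.1 + p.2 := measurable_add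
  have hmf₁ : Measurable (Prod.map (@id ℝ) e₂) := measurable_id.prodMap e₂.measurable
  have hmf₂ : Measurable (Prod.map (fun p : ℝ × ℝ => p.1 + p.2) (@id (Fin k → ℝ))) :=
    hadd.prodMap measurable_id
  have hassoc := (MeasurableEquiv.prodAssoc (α := ℝ) (β := ℝ) (γ := Fin k → ℝ)).symm.measurable
  rw [← Measure.map_map e₂.symm.measurable (hmf₂.comp (hassoc.comp (hmf₁.comp e₁.measurable))),
    ← Measure.map_map hmf₂ (hassoc.comp (hmf₁.comp e₁.measurable)),
    ← Measure.map_map hassoc (hmf₁.comp e₁.measurable),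
    ← Measure.map_map hmf₁ e₁.measurable]
  have h1 : (Measure.pi γ).map e₁
      = (γ 0).prod (Measure.pi fun j : Fin (k + 1) => γ j.succ) := by
    have := (measurePreserving_piFinSuccAbove γ 0).map_eq
    simpa [Fin.zero_succAbove, e₁] using this
  rw [h1, show ((γ 0).prod (Measure.pi fun j : Fin (k + 1) => γ j.succ)).map
        (Prod.map (@id ℝ) e₂)
      = (γ 0).prod ((Measure.pi fun j : Fin (k + 1) => γ j.succ).map e₂) from by
    rw [← Measure.map_prod_map _ _ measurable_id e₂.measurable, Measure.map_id]]
  have h2 : (Measure.pi fun j : Fin (k + 1) => γ j.succ).map e₂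
      = (γ 1).prod (Measure.pi rest) := by
    have := (measurePreserving_piFinSuccAbove (fun j : Fin (k + 1) => γ j.succ) 0).map_eq
    simpa [Fin.zero_succAbove, Fin.succ_zero_eq_one, hrest, e₂] using this
  rw [h2]
  have h3 : ((γ 0).prod ((γ 1).prod (Measure.pi rest))).map
      (MeasurableEquiv.prodAssoc (α := ℝ) (β := ℝ) (γ := Fin k → ℝ)).symm
      = ((γ 0).prod (γ 1)).prod (Measure.pi rest) :=
    ((measurePreserving_prodAssoc (γ 0) (γ 1) (Measure.pi rest)).symm _).map_eq
  rw [h3, show (((γ 0).prod (γ 1)).prod (Measure.pi rest)).map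
        (Prod.map (fun p : ℝ × ℝ => p.1 + p.2) (@id (Fin k → ℝ)))
      = (((γ 0).prod (γ 1)).map (fun p : ℝ × ℝ => p.1 + p.2)).prod (Measure.pi rest) from by
    rw [← Measure.map_prod_map _ _ hadd measurable_id, Measure.map_id], hρ]
  haveI : ∀ i : Fin (k + 1), IsProbabilityMeasure ((Fin.cons ρ rest : Fin (k + 1) → Measure ℝ) i) :=
    fun i => Fin.cases (by simpa using (inferInstance : IsProbabilityMeasure ρ))
      (fun j => by simpa [hrest] using (inferInstance : IsProbabilityMeasure (γ j.succ.succ))) i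
  have h5 : (Measure.pi ((Fin.cons ρ rest) : Fin (k + 1) → Measure ℝ)).map e₂
      = ρ.prod (Measure.pi rest) := by
    have := (measurePreserving_piFinSuccAbove ((Fin.cons ρ rest) : Fin (k + 1) → Measure ℝ) 0).map_eq
    simpa [Fin.zero_succAbove, Fin.cons_zero, Fin.cons_succ, e₂] using this
  rw [← h5, Measure.map_map e₂.symm.measurable e₂.measurable]
  simp

end Aux

/-- aggregation property of the Dirichlet distribution. If
`(b_1,…,b_k) ∼ Dirichlet(a_1,…,a_k)` and the first two cells are merged, then
`(b_1 + b_2, b_3, …, b_k) ∼ Dirichlet(a_1 + a_2, a_3, …, a_k)`. -/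
theorem dirichlet_aggregation {k : ℕ} (a : Fin (k + 2) → ℝ)
    (hapos : ∀ i, 0 < a i) (ν : Measure (Fin (k + 2) → ℝ))
    (hν : IsDirichlet a ν) :
    IsDirichlet (Fin.cons (a 0 + a 1) (fun j : Fin k => a j.succ.succ))
      (ν.map (fun b => Fin.cons (b 0 + b 1)
        (fun j : Fin k => b j.succ.succ))) := by
  obtain ⟨Ω, ms, μ, hprob, X, hmeas, hindep, hlaw, hmap⟩ := hν
  set a' : Fin (k + 1) → ℝ := Fin.cons (a 0 + a 1) (fun j : Fin k => a j.succ.succ) with ha'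
  have ha'pos : ∀ i, 0 < a' i := by
    intro i
    refine Fin.cases ?_ (fun j => ?_) i
    · simpa [ha'] using add_pos (hapos 0) (hapos 1)
    · simpa [ha'] using hapos j.succ.succ
  set γ : Fin (k + 2) → Measure ℝ := fun i => gammaMeasure (a i) 1 with hγ
  set γ' : Fin (k + 1) → Measure ℝ := fun i => gammaMeasure (a' i) 1 with hγ'
  haveI : ∀ i, IsProbabilityMeasure (γ i) := fun i => isProbabilityMeasure_gammaMeasure (hapos i) one_pos
  haveI : ∀ i, IsProbabilityMeasure (γ' i) :=
    fun i => isProbabilityMeasure_gammaMeasure (ha'pos i) one_pos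
  haveI : IsProbabilityMeasure (gammaMeasure (a 0 + a 1) 1) :=
    isProbabilityMeasure_gammaMeasure (add_pos (hapos 0) (hapos 1)) one_pos
  set Y : Fin (k + 1) → Ω → ℝ :=
    Fin.cons (fun ω => X 0 ω + X 1 ω) (fun j => X j.succ.succ) with hY
  have hYmeas : ∀ i, Measurable (Y i) := by
    intro i
    refine Fin.cases ?_ (fun j => ?_) i
    · simpa [hY, Pi.add_def] using (hmeas 0).add (hmeas 1)
    · simpa [hY] using hmeas j.succ.succ
  have hXvec : Measurable (fun ω i => X i ω) := measurable_pi_lambda _ fun i => hmeas i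
  have hYvec : Measurable (fun ω i => Y i ω) := measurable_pi_lambda _ fun i => hYmeas i
  have hT : Measurable (fun x : Fin (k + 2) → ℝ =>
      (Fin.cons (x 0 + x 1) (fun j : Fin k => x j.succ.succ) : Fin (k + 1) → ℝ)) := by
    apply measurable_pi_lambda
    intro i
    refine Fin.cases ?_ (fun j => ?_) i
    · simpa [Pi.add_def] using (measurable_pi_apply 0).add (measurable_pi_apply 1)
    · simpa using measurable_pi_apply (j.succ.succ : Fin (k + 2))
  have hpi : μ.map (fun ω i => X i ω) = Measure.pi γ := by
    rw [map_pi_of_iIndep hmeas hindep]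
    congr 1
    funext i
    rw [hlaw i, hγ]
  have hcomp : (fun ω i => Y i ω) = (fun x : Fin (k + 2) → ℝ =>
      (Fin.cons (x 0 + x 1) (fun j : Fin k => x j.succ.succ) : Fin (k + 1) → ℝ))
        ∘ (fun ω i => X i ω) := by
    funext ω
    ext i
    refine Fin.cases ?_ (fun j => ?_) i <;> simp [hY]
  have hγ'cons : γ' = (Fin.cons (gammaMeasure (a 0 + a 1) 1)
      (fun j : Fin k => γ j.succ.succ) : Fin (k + 1) → Measure ℝ) := by
    funext i
    refine Fin.cases ?_ (fun j => ?_) i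
    · simp [hγ', ha']
    · simp [hγ', ha', hγ]
  have hmapY : μ.map (fun ω i => Y i ω) = Measure.pi γ' := by
    rw [hcomp, ← Measure.map_map hT hXvec, hpi,
      pi_map_merge γ (gammaMeasure (a 0 + a 1) 1) (gammaMeasure_conv (hapos 0) (hapos 1)),
      hγ'cons]
  refine ⟨Ω, ms, μ, hprob, Y, hYmeas, iIndep_of_map_pi hYmeas γ' hmapY, ?_, ?_⟩
  · intro i
    have : Y i = (fun x : Fin (k + 1) → ℝ => x i) ∘ (fun ω j => Y j ω) := rfl
    rw [this, ← Measure.map_map (measurable_pi_apply i) hYvec, hmapY, pi_map_eval γ' i]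
  · have hnorm : Measurable (fun ω (i : Fin (k + 2)) => X i ω / ∑ j, X j ω) :=
      measurable_pi_lambda _ fun i => (hmeas i).div (Finset.measurable_sum _ fun j _ => hmeas j)
    rw [hmap, Measure.map_map hT hnorm]
    congr 1
    funext ω
    have hsum : ∑ j : Fin (k + 1), Y j ω = ∑ j : Fin (k + 2), X j ω := by
      rw [Fin.sum_univ_succ (f := fun j : Fin (k + 1) => Y j ω),
        Fin.sum_univ_succ (f := fun j : Fin (k + 2) => X j ω),
        Fin.sum_univ_succ (f := fun j : Fin (k + 1) => X j.succ ω)]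
      simp [hY, add_assoc]
    ext i
    refine Fin.cases ?_ (fun j => ?_) i
    · simp only [hsum]; simp [hY, ← add_div]
    · simp only [hsum]; simp [hY]
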